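/- arXiv:1101.0799 — 3 statements merged into one kernel-verified Lean document; each statement's English description precedes it below -/
import Mathlib

section
/- Let a > b > 0 and c = √(a² − b²). Set T = a² + b² + 2a²b² + 2ab·√(1 + a² + b² + a²b²) and z₀ = (i/c)·√T. Then: (1) ((a² + b²)·z₀² + c²)² = 4a²b²·z₀²·(z₀² − c²), i.e., z₀ satisfies the algebraic equation 1 + z·S(z) = 0 for a branch of the Schwarz function S(z) = ((a²+b²)/c²)z ± (2ab/c)√(z²−c²) of the ellipse; and (2) z₀ lies strictly outside the closed ellipse, i.e., writing z₀ = x₀ + iy₀ one has x₀²/a² + y₀²/b² > 1. -/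
/-- The quadrature node `z₀ = (i/c)√T`, with
`T = a² + b² + 2a²b² + 2ab √(1 + a² + b² + a²b²)`, satisfies the algebraic equation
`((a²+b²) z₀² + c²)² = 4a²b² z₀² (z₀² - c²)` (i.e. `1 + z S(z) = 0` for a branch of the
Schwarz function of the ellipse), and lies strictly outside the closed ellipse. -/
theorem ellipse_quadrature_node (a b c T : ℝ) (hab : b < a) (hb : 0 < b)
    (hc : c = Real.sqrt (a ^ 2 - b ^ 2))
    (hT : T = a ^ 2 + b ^ 2 + 2 * a ^ 2 * b ^ 2
        + 2 * a * b * Real.sqrt (1 + a ^ 2 + b ^ 2 + a ^ 2 * b ^ 2))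
    (z₀ : ℂ) (hz₀ : z₀ = Complex.I / (c : ℂ) * (Real.sqrt T : ℂ)) :
    (((a ^ 2 + b ^ 2 : ℝ) : ℂ) * z₀ ^ 2 + (c : ℂ) ^ 2) ^ 2 =
        4 * (a : ℂ) ^ 2 * (b : ℂ) ^ 2 * z₀ ^ 2 * (z₀ ^ 2 - (c : ℂ) ^ 2) ∧
      1 < z₀.re ^ 2 / a ^ 2 + z₀.im ^ 2 / b ^ 2 := by
  have ha : 0 < a := hb.trans hab
  have hd : (0:ℝ) < a ^ 2 - b ^ 2 := by nlinarith
  have hcpos : 0 < c := hc ▸ Real.sqrt_pos.mpr hd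
  have hc2 : c ^ 2 = a ^ 2 - b ^ 2 := by rw [hc, Real.sq_sqrt hd.le]
  set s := Real.sqrt (1 + a ^ 2 + b ^ 2 + a ^ 2 * b ^ 2) with hs
  have hsnn : 0 ≤ s := Real.sqrt_nonneg _
  have hs2 : s ^ 2 = 1 + a ^ 2 + b ^ 2 + a ^ 2 * b ^ 2 := Real.sq_sqrt (by positivity)
  have hTpos : 0 < T := by rw [hT]; positivity
  have hrT : Real.sqrt T ^ 2 = T := Real.sq_sqrt hTpos.le
  have hcne : (c : ℂ) ≠ 0 := by exact_mod_cast (Complex.ofReal_ne_zero.mpr hcpos.ne')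
  have hz2 : z₀ ^ 2 = -((T : ℂ) / (c : ℂ) ^ 2) := by
    rw [hz₀]
    have h : ((Real.sqrt T : ℝ) : ℂ) ^ 2 = (T : ℂ) := by exact_mod_cast congrArg Complex.ofReal hrT
    field_simp [Complex.I_sq]
    rw [Complex.I_sq, h]; ring
  have hkey : (c ^ 4 - (a ^ 2 + b ^ 2) * T) ^ 2 = 4 * a ^ 2 * b ^ 2 * T * (T + c ^ 4) := by
    have hc4 : c ^ 4 = (a ^ 2 - b ^ 2) ^ 2 := by rw [show c^4 = (c^2)^2 by ring, hc2]
    rw [hc4, hT]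
    linear_combination (4 * a ^ 2 * b ^ 2 * (a ^ 2 - b ^ 2) ^ 2) * hs2
  constructor
  · rw [hz2]
    field_simp
    have h := congrArg (Complex.ofReal) hkey
    push_cast at h
    push_cast
    linear_combination h
  · have hre : z₀.re = 0 ∧ z₀.im = Real.sqrt T / c := by
      rw [hz₀]
      constructor <;> simp [Complex.div_re, Complex.div_im, Complex.ext_iff] <;> ring
    have hsq : (Real.sqrt T / c) ^ 2 = T / (a ^ 2 - b ^ 2) := by rw [div_pow, hrT, hc2]
    rw [hre.1, hre.2, hsq, zero_pow (by norm_num), zero_div, zero_add, div_div,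
      lt_div_iff₀ (by positivity)]
    nlinarith [mul_nonneg (mul_nonneg ha.le hb.le) hsnn]
end

section
/- Let a > b > 0, c = √(a² − b²), and define the Joukowski map f(ζ) = (c²ζ² + (a+b)²)/(2(a+b)ζ) for ζ ∈ ℂ ∖ {0}. Then: (1) for every θ ∈ ℝ, f(e^{iθ}) = a·cos θ − i·b·sin θ, so f maps the unit circle onto the ellipse {x + iy : x²/a² + y²/b² = 1}; (2) f is injective on the punctured open unit disk {ζ : 0 < |ζ| < 1}; and (3) f({ζ : 0 < |ζ| < 1}) = {x + iy : x²/a² + y²/b² > 1}, the open exterior of the closed ellipse. -/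
set_option maxHeartbeats 1000000 in
/-- The Joukowski map `f(ζ) = (c²ζ² + (a+b)²)/(2(a+b)ζ)`: (1) it maps the unit circle onto
the ellipse, via `f(e^{iθ}) = a cos θ - i b sin θ`; (2) it is injective on the punctured open
unit disk; (3) it maps the punctured open unit disk onto the open exterior of the closed
ellipse. -/
theorem joukowski_map_ellipse (a b c : ℝ) (hab : b < a) (hb : 0 < b)
    (hc : c = Real.sqrt (a ^ 2 - b ^ 2))
    (f : ℂ → ℂ)
    (hf : ∀ ζ : ℂ, f ζ = ((c : ℂ) ^ 2 * ζ ^ 2 + ((a : ℂ) + b) ^ 2) / (2 * ((a : ℂ) + b) * ζ)) :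
    (∀ θ : ℝ, f (Complex.exp (θ * Complex.I)) =
        (a : ℂ) * Real.cos θ - Complex.I * (b : ℂ) * Real.sin θ) ∧
    Set.InjOn f {ζ : ℂ | 0 < ‖ζ‖ ∧ ‖ζ‖ < 1} ∧
    f '' {ζ : ℂ | 0 < ‖ζ‖ ∧ ‖ζ‖ < 1} =
      {z : ℂ | 1 < z.re ^ 2 / a ^ 2 + z.im ^ 2 / b ^ 2} := by
  have ha : 0 < a := hb.trans hab
  have hab0 : (0:ℝ) < a + b := by linarith
  have hab0' : ((a:ℂ) + b) ≠ 0 := by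
    have : ((a+b:ℝ):ℂ) ≠ 0 := Complex.ofReal_ne_zero.mpr (ne_of_gt hab0)
    push_cast at this; exact this
  have hc2 : (c:ℂ)^2 = ((a:ℂ)+b) * ((a:ℂ)-b) := by
    have h1 : c^2 = a^2 - b^2 := by
      rw [hc]; exact Real.sq_sqrt (by nlinarith)
    have h2 := congrArg (fun x : ℝ => (x:ℂ)) h1
    push_cast at h2
    rw [h2]; ring
  -- key characterization
  have hkey : ∀ ζ z : ℂ, ζ ≠ 0 → (f ζ = z ↔ 2*z*ζ = ((a:ℂ)-b)*ζ^2 + ((a:ℂ)+b)) := by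
    intro ζ z hζ
    rw [hf, div_eq_iff (by exact mul_ne_zero (by simp [hab0']) hζ), hc2]
    constructor
    · intro h
      apply mul_left_cancel₀ hab0'
      linear_combination -h
    · intro h; linear_combination -((a:ℂ)+b) * h
  -- the fundamental real identity
  have haux : ∀ ζ z : ℂ, ζ ≠ 0 → 2*z*ζ = ((a:ℂ)-b)*ζ^2 + ((a:ℂ)+b) →
      z.re^2*b^2 + z.im^2*a^2 - a^2*b^2 =
      (((a-b)^2*(ζ.re^2+ζ.im^2)^2 - 2*(a^2+b^2)*(ζ.re^2+ζ.im^2) + (a+b)^2)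
        * (ζ.re^2*b^2 + ζ.im^2*a^2)) / (4*(ζ.re^2+ζ.im^2)^2) := by
    intro ζ z hζ h
    have hs0 : 0 < ζ.re^2 + ζ.im^2 := by
      have := Complex.normSq_pos.mpr hζ
      simpa [Complex.normSq_apply, pow_two] using this
    have E1 := congrArg Complex.re h
    have E2 := congrArg Complex.im h
    simp only [pow_two, Complex.mul_re, Complex.mul_im, Complex.add_re, Complex.add_im,
      Complex.sub_re, Complex.sub_im, Complex.ofReal_re, Complex.ofReal_im,
      Complex.re_ofNat, Complex.im_ofNat] at E1 E2
    have hX : z.re * (2*(ζ.re^2+ζ.im^2)) = ζ.re*((a-b)*(ζ.re^2+ζ.im^2)+(a+b)) := by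
      linear_combination ζ.re * E1 + ζ.im * E2
    have hY : z.im * (2*(ζ.re^2+ζ.im^2)) = ζ.im*((a-b)*(ζ.re^2+ζ.im^2)-(a+b)) := by
      linear_combination ζ.re * E2 - ζ.im * E1
    have hXv : z.re = ζ.re*((a-b)*(ζ.re^2+ζ.im^2)+(a+b)) / (2*(ζ.re^2+ζ.im^2)) :=
      eq_div_of_mul_eq (by positivity) hX
    have hYv : z.im = ζ.im*((a-b)*(ζ.re^2+ζ.im^2)-(a+b)) / (2*(ζ.re^2+ζ.im^2)) :=
      eq_div_of_mul_eq (by positivity) hY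
    rw [hXv, hYv]
    field_simp
    ring
  -- positivity / negativity of the quadratic Q(s)
  have hQpos : ∀ s : ℝ, 0 < s → s < 1 →
      0 < (a-b)^2*s^2 - 2*(a^2+b^2)*s + (a+b)^2 := by
    intro s h0 h1
    nlinarith [mul_pos (show (0:ℝ) < (a+b)^2 - (a-b)^2*s by nlinarith) (show (0:ℝ) < 1 - s by linarith)]
  have hQneg : ∀ s : ℝ, 1 ≤ s → (a-b)*s ≤ a+b →
      (a-b)^2*s^2 - 2*(a^2+b^2)*s + (a+b)^2 ≤ 0 := by
    intro s h1 h2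
    nlinarith [mul_nonneg (show (0:ℝ) ≤ (a+b)^2 - (a-b)^2*s by nlinarith) (show (0:ℝ) ≤ s - 1 by linarith)]
  have hconv : ∀ z : ℂ, (1 < z.re^2/a^2 + z.im^2/b^2 ↔
      0 < z.re^2*b^2 + z.im^2*a^2 - a^2*b^2) := by
    intro z
    rw [div_add_div _ _ (by positivity) (by positivity), lt_div_iff₀ (by positivity)]
    constructor <;> intro h <;> nlinarith
  refine ⟨?_, ?_, ?_⟩
  · -- part 1
    intro θ
    rw [(hkey _ _ (Complex.exp_ne_zero _))]
    rw [Complex.exp_mul_I, Complex.ofReal_cos, Complex.ofReal_sin]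
    linear_combination ((a:ℂ)+b) * (Complex.sin_sq_add_cos_sq (θ:ℂ)) -
      (((a:ℂ)+b) * Complex.sin (θ:ℂ)^2) * Complex.I_sq
  · -- part 2: injectivity
    rintro ζ ⟨hζ0, hζ1⟩ w ⟨hw0, hw1⟩ hfe
    have hζ : ζ ≠ 0 := by simpa using (norm_pos_iff.mp hζ0)
    have hw : w ≠ 0 := by simpa using (norm_pos_iff.mp hw0)
    have h1 : 2*(f ζ)*ζ = ((a:ℂ)-b)*ζ^2 + ((a:ℂ)+b) := (hkey ζ (f ζ) hζ).mp rfl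
    have h2 : 2*(f ζ)*w = ((a:ℂ)-b)*w^2 + ((a:ℂ)+b) := by
      rw [hfe]; exact (hkey w (f w) hw).mp rfl
    have key : (ζ - w) * (((a:ℂ)-b)*ζ*w - ((a:ℂ)+b)) = 0 := by
      linear_combination ζ*h2 - w*h1
    rcases mul_eq_zero.mp key with h | h
    · exact sub_eq_zero.mp h
    · exfalso
      have h3 : ((a:ℂ)-b)*ζ*w = ((a:ℂ)+b) := by linear_combination h
      have h4 : ‖((a:ℂ)-b)*ζ*w‖ = ‖((a:ℂ)+b)‖ := by rw [h3]
      have hcab : ‖((a:ℂ)-b)‖ = a - b := by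
        rw [show ((a:ℂ)-b) = ((a-b:ℝ):ℂ) by push_cast; ring, Complex.norm_real, Real.norm_eq_abs,
          abs_of_pos (by linarith)]
      have hcab2 : ‖((a:ℂ)+b)‖ = a + b := by
        rw [show ((a:ℂ)+b) = ((a+b:ℝ):ℂ) by push_cast; ring, Complex.norm_real, Real.norm_eq_abs,
          abs_of_pos hab0]
      rw [norm_mul, norm_mul, hcab, hcab2, mul_assoc] at h4
      have e1 : ‖ζ‖ * ‖w‖ < 1 :=
        lt_of_le_of_lt (mul_le_of_le_one_right (norm_nonneg ζ) hw1.le) hζ1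
      have e2 : (a-b) * (‖ζ‖ * ‖w‖) < (a-b)*1 :=
        mul_lt_mul_of_pos_left e1 (by linarith)
      rw [mul_one] at e2
      linarith
  · -- part 3
    ext z
    simp only [Set.mem_image, Set.mem_setOf_eq]
    constructor
    · rintro ⟨ζ, ⟨hζ0, hζ1⟩, rfl⟩
      have hζ : ζ ≠ 0 := by simpa using (norm_pos_iff.mp hζ0)
      have hs0 : 0 < ζ.re^2 + ζ.im^2 := by
        have := Complex.normSq_pos.mpr hζ
        simpa [Complex.normSq_apply, pow_two] using this
      have hs1 : ζ.re^2 + ζ.im^2 < 1 := by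
        nlinarith [norm_nonneg ζ, hζ1, Complex.sq_norm ζ, Complex.normSq_apply ζ]
      have h := haux ζ (f ζ) hζ ((hkey ζ (f ζ) hζ).mp rfl)
      rw [hconv, h]
      apply div_pos
      · apply mul_pos (hQpos _ hs0 hs1)
        nlinarith [mul_pos (show (0:ℝ) < b^2 by positivity) hs0,
          mul_nonneg (sq_nonneg ζ.im) (show (0:ℝ) ≤ a^2-b^2 by nlinarith)]
      · exact mul_pos (by norm_num) (pow_pos hs0 2)
    · intro hz
      obtain ⟨w, hw⟩ : ∃ w : ℂ, w ^ 2 = z^2 - (c:ℂ)^2 := IsAlgClosed.exists_pow_nat_eq _ two_pos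
      have hcab : ((a:ℂ) - b) ≠ 0 := by
        have : ((a-b:ℝ):ℂ) ≠ 0 := Complex.ofReal_ne_zero.mpr (by
          intro h; linarith : a - b ≠ 0)
        push_cast at this; exact this
      set ζ₁ : ℂ := (z - w) / ((a:ℂ)-b) with hζ₁
      set ζ₂ : ℂ := (z + w) / ((a:ℂ)-b) with hζ₂
      have hz₁ : ((a:ℂ)-b) * ζ₁ = z - w := by rw [hζ₁]; field_simp
      have hz₂ : ((a:ℂ)-b) * ζ₂ = z + w := by rw [hζ₂]; field_simp
      have hprod : ζ₁ * ζ₂ = ((a:ℂ)+b) / ((a:ℂ)-b) := by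
        rw [eq_div_iff hcab]
        apply mul_left_cancel₀ hcab
        linear_combination (((a:ℂ)-b)*ζ₂)*hz₁ + (z - w)*hz₂ - hw + hc2
      have hprodabs : ‖ζ₁‖ * ‖ζ₂‖ = (a+b)/(a-b) := by
        have : ‖ζ₁ * ζ₂‖ = ‖((a:ℂ)+b) / ((a:ℂ)-b)‖ := by rw [hprod]
        rwa [norm_mul, show ((a:ℂ)+b) / ((a:ℂ)-b) = (((a+b)/(a-b) : ℝ):ℂ) by push_cast; ring,
          Complex.norm_real, Real.norm_eq_abs, abs_of_pos (by apply div_pos hab0; linarith)] at this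
      have hζ₁0 : ζ₁ ≠ 0 := by
        intro h; rw [h, zero_mul] at hprod
        have h0 : ((a:ℂ)+b) = 0 := by field_simp at hprod; exact hprod.symm.trans (zero_mul _)
        exact hab0' h0
      have hζ₂0 : ζ₂ ≠ 0 := by
        intro h; rw [h, mul_zero] at hprod
        have h0 : ((a:ℂ)+b) = 0 := by field_simp at hprod; exact hprod.symm.trans (zero_mul _)
        exact hab0' h0
      have hroot1 : 2*z*ζ₁ = ((a:ℂ)-b)*ζ₁^2 + ((a:ℂ)+b) := by
        apply mul_left_cancel₀ hcab
        linear_combination (2*z - (((a:ℂ)-b)*ζ₁ + (z - w)))*hz₁ - hw + hc2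
      have hroot2 : 2*z*ζ₂ = ((a:ℂ)-b)*ζ₂^2 + ((a:ℂ)+b) := by
        apply mul_left_cancel₀ hcab
        linear_combination (2*z - (((a:ℂ)-b)*ζ₂ + (z + w)))*hz₂ - hw + hc2
      -- a root with small modulus works
      have main : ∀ ζ : ℂ, ζ ≠ 0 → 2*z*ζ = ((a:ℂ)-b)*ζ^2 + ((a:ℂ)+b) →
          (a-b) * (ζ.re^2+ζ.im^2) ≤ a+b → ∃ ζ' : ℂ,
          (0 < ‖ζ'‖ ∧ ‖ζ'‖ < 1) ∧ f ζ' = z := by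
        intro ζ hζ hroot hsmall
        have hs0 : 0 < ζ.re^2 + ζ.im^2 := by
          have := Complex.normSq_pos.mpr hζ
          simpa [Complex.normSq_apply, pow_two] using this
        have hs1 : ζ.re^2 + ζ.im^2 < 1 := by
          by_contra hcon
          push_neg at hcon
          have h := haux ζ z hζ hroot
          rw [hconv z, h] at hz
          have hnum : (((a-b)^2*(ζ.re^2+ζ.im^2)^2 - 2*(a^2+b^2)*(ζ.re^2+ζ.im^2) + (a+b)^2)
              * (ζ.re^2*b^2 + ζ.im^2*a^2)) / (4*(ζ.re^2+ζ.im^2)^2) ≤ 0 := by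
            apply div_nonpos_of_nonpos_of_nonneg
            · apply mul_nonpos_of_nonpos_of_nonneg
              · exact hQneg _ hcon hsmall
              · positivity
            · positivity
          linarith
        refine ⟨ζ, ⟨norm_pos_iff.mpr hζ, ?_⟩, (hkey ζ z hζ).mpr hroot⟩
        nlinarith [Complex.sq_norm ζ, Complex.normSq_apply ζ, norm_nonneg ζ]
      have habs2s : ∀ ζ : ℂ, ‖ζ‖^2 = ζ.re^2 + ζ.im^2 := by
        intro ζ
        rw [Complex.sq_norm, Complex.normSq_apply]; ring
      have hdivpos : (0:ℝ) < (a+b)/(a-b) := div_pos hab0 (by linarith)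
      have h2 : (a-b) * ((a+b)/(a-b)) = a+b := by
        rw [mul_comm, div_mul_cancel₀]
        linarith
      rcases le_total ‖ζ₁‖ ‖ζ₂‖ with hle | hle
      · refine main ζ₁ hζ₁0 hroot1 ?_
        rw [← habs2s, pow_two]
        have h1 : ‖ζ₁‖ * ‖ζ₁‖ ≤ ‖ζ₁‖ * ‖ζ₂‖ :=
          mul_le_mul_of_nonneg_left hle (norm_nonneg ζ₁)
        have h3 := mul_le_mul_of_nonneg_left h1 (show (0:ℝ) ≤ a-b by linarith)
        rw [hprodabs, h2] at h3
        exact h3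
      · refine main ζ₂ hζ₂0 hroot2 ?_
        rw [← habs2s, pow_two]
        have h1 : ‖ζ₂‖ * ‖ζ₂‖ ≤ ‖ζ₁‖ * ‖ζ₂‖ :=
          mul_le_mul_of_nonneg_right hle (norm_nonneg ζ₂)
        have h3 := mul_le_mul_of_nonneg_left h1 (show (0:ℝ) ≤ a-b by linarith)
        rw [hprodabs, h2] at h3
        exact h3
end

section
/- Let a > b > 0, c = √(a² − b²), and for z ∈ ℂ consider the quadratic polynomial p_z(ζ) = c²ζ² − 2(a+b)·z·ζ + (a+b)², whose roots are exactly the solutions ζ ≠ 0 of f(ζ) = z for the Joukowski map f(ζ) = (c²ζ² + (a+b)²)/(2(a+b)ζ). Write z = x + iy. Then: (1) if x²/a² + y²/b² < 1 (z strictly inside the ellipse), both roots of p_z (counted with multiplicity) have modulus > 1; (2) if x²/a² + y²/b² > 1 (z strictly outside the ellipse), then p_z has exactly one root of modulus > 1 and exactly one root of modulus < 1. Consequently, the counting function ρ(z) = card{ζ : |ζ| > 1, f(ζ) = z} equals 2 inside the ellipse and 1 outside it. -/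
open Polynomial
open scoped Classical

set_option maxHeartbeats 1000000 in
lemma key_identity' (a b : ℝ) (hab : b < a) (hb : 0 < b) (z ζ : ℂ)
    (hz : ((a:ℂ)^2 - (b:ℂ)^2) * ζ^2 - 2*((a:ℂ)+b)*z*ζ + ((a:ℂ)+b)^2 = 0) :
    (z.re^2/a^2 + z.im^2/b^2 - 1) * (4*a^2*b^2*(a+b)^2*(Complex.normSq ζ)^2)
      = (a+b)^2*(Complex.normSq ζ - 1)*((a-b)^2*Complex.normSq ζ - (a+b)^2)*(b^2*ζ.re^2 + a^2*ζ.im^2) := by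
  have ha : (0:ℝ) < a := hb.trans hab
  have hs : (0:ℝ) < a + b := by linarith
  have hm : ζ * (starRingEnd ℂ) ζ = (Complex.normSq ζ : ℂ) := Complex.mul_conj ζ
  set q : ℝ := Complex.normSq ζ with hqdef
  have h2 : (((a^2-b^2) * q : ℝ) : ℂ) * ζ - ((2*(a+b)*q : ℝ) : ℂ) * z
      + (((a+b)^2 : ℝ) : ℂ) * (starRingEnd ℂ) ζ = 0 := by
    push_cast
    linear_combination (starRingEnd ℂ) ζ * hz - (((a:ℂ)^2 - (b:ℂ)^2) * ζ - 2*((a:ℂ)+b)*z) * hm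
  have hq : q = ζ.re^2 + ζ.im^2 := by
    rw [hqdef, Complex.normSq_apply]; ring
  set A : ℝ := a^2 - b^2 with hA
  set S : ℝ := (a+b)^2 with hS
  set T : ℝ := 2*(a+b) with hT
  have hx : A * q * ζ.re - T*q*z.re + S * ζ.re = 0 := by
    have := congrArg Complex.re h2
    simpa [Complex.add_re, Complex.sub_re, Complex.re_ofReal_mul] using this
  have hy : A * q * ζ.im - T*q*z.im - S * ζ.im = 0 := by
    have := congrArg Complex.im h2
    simp [Complex.add_im, Complex.sub_im, Complex.im_ofReal_mul] at this
    linear_combination this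
  rw [hA, hS, hT] at hx hy
  have key : 4*b^2*(a+b)^2*q^2*z.re^2 + 4*a^2*(a+b)^2*q^2*z.im^2 - 4*a^2*b^2*(a+b)^2*q^2
      = (a+b)^2*(q-1)*((a-b)^2*q-(a+b)^2)*(b^2*ζ.re^2+a^2*ζ.im^2) := by
    rw [hq] at hx hy ⊢
    linear_combination
      (-(b^2)*(((a^2-b^2)*(ζ.re^2+ζ.im^2)+(a+b)^2)*ζ.re + 2*(a+b)*(ζ.re^2+ζ.im^2)*z.re))*hx
      + (-(a^2)*(((a^2-b^2)*(ζ.re^2+ζ.im^2)-(a+b)^2)*ζ.im + 2*(a+b)*(ζ.re^2+ζ.im^2)*z.im))*hy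
  have expand : (z.re^2/a^2 + z.im^2/b^2 - 1) * (4*a^2*b^2*(a+b)^2*q^2)
      = 4*b^2*(a+b)^2*q^2*z.re^2 + 4*a^2*(a+b)^2*q^2*z.im^2 - 4*a^2*b^2*(a+b)^2*q^2 := by
    have ha0 : a ≠ 0 := ne_of_gt ha
    have hb0 : b ≠ 0 := ne_of_gt hb
    field_simp
  rw [expand, key]


set_option maxHeartbeats 2000000 in
/-- For `z` in ℂ, the roots of the quadratic `p_z(ζ) = c²ζ² - 2(a+b)zζ + (a+b)²` are exactly
the nonzero solutions of `f(ζ) = z` for the Joukowski map `f`. If `z` is strictly inside the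
ellipse, both roots (with multiplicity) have modulus `> 1`; if `z` is strictly outside, there
is exactly one root of modulus `> 1` and exactly one of modulus `< 1` (with multiplicity).
Consequently the counting function `ρ(z)` of the exterior of the unit disk under `f` equals
`2` inside the ellipse and `1` outside. -/
theorem joukowski_counting_function (a b c : ℝ) (hab : b < a) (hb : 0 < b)
    (hc : c = Real.sqrt (a ^ 2 - b ^ 2))
    (f : ℂ → ℂ)
    (hf : ∀ ζ : ℂ, f ζ = ((c : ℂ) ^ 2 * ζ ^ 2 + ((a : ℂ) + b) ^ 2) / (2 * ((a : ℂ) + b) * ζ))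
    (z : ℂ) (P : Polynomial ℂ)
    (hP : P = C ((c : ℂ) ^ 2) * X ^ 2 - C (2 * ((a : ℂ) + b) * z) * X + C (((a : ℂ) + b) ^ 2)) :
    (∀ ζ : ℂ, ζ ≠ 0 → (P.eval ζ = 0 ↔ f ζ = z)) ∧
    (z.re ^ 2 / a ^ 2 + z.im ^ 2 / b ^ 2 < 1 →
      (∀ ζ ∈ P.roots, 1 < ‖ζ‖) ∧
      Multiset.card (P.roots.filter fun ζ => 1 < ‖ζ‖) = 2) ∧
    (1 < z.re ^ 2 / a ^ 2 + z.im ^ 2 / b ^ 2 →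
      Multiset.card (P.roots.filter fun ζ => 1 < ‖ζ‖) = 1 ∧
      Multiset.card (P.roots.filter fun ζ => ‖ζ‖ < 1) = 1) := by
  
  have ha : (0:ℝ) < a := hb.trans hab
  have hd : (0:ℝ) < a - b := by linarith
  have hs : (0:ℝ) < a + b := by linarith
  have habpos : (0:ℝ) < a^2 - b^2 := by nlinarith
  have hc2 : c^2 = a^2 - b^2 := by rw [hc]; exact Real.sq_sqrt habpos.le
  have hc2C : (c:ℂ)^2 = (a:ℂ)^2 - (b:ℂ)^2 := by
    have := congrArg (Complex.ofReal) hc2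
    push_cast at this; exact this
  have hcne : ((c:ℂ)^2) ≠ 0 := by
    have h0 : ((a^2 - b^2 : ℝ) : ℂ) ≠ 0 := by exact_mod_cast ne_of_gt habpos
    push_cast at h0
    rw [hc2C]; exact h0
  have hsne : ((a:ℂ)+b) ≠ 0 := by
    have h0 : ((a + b : ℝ) : ℂ) ≠ 0 := by exact_mod_cast ne_of_gt hs
    push_cast at h0; exact h0
  -- evaluation of P
  have heval : ∀ ζ : ℂ, P.eval ζ
      = (c:ℂ)^2*ζ^2 - 2*((a:ℂ)+b)*z*ζ + ((a:ℂ)+b)^2 := by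
    intro ζ
    rw [hP]
    simp [Polynomial.eval_add, Polynomial.eval_sub, Polynomial.eval_mul,
      Polynomial.eval_pow, Polynomial.eval_C, Polynomial.eval_X]
  -- roots of P
  obtain ⟨w, hw⟩ : ∃ w : ℂ, w^2 = ((a:ℂ)+b)^2 * z^2 - (c:ℂ)^2 * ((a:ℂ)+b)^2 :=
    IsAlgClosed.exists_pow_nat_eq _ (by norm_num : (0:ℕ) < 2)
  set r₁ : ℂ := (((a:ℂ)+b)*z + w) / (c:ℂ)^2 with hr1
  set r₂ : ℂ := (((a:ℂ)+b)*z - w) / (c:ℂ)^2 with hr2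
  have hinv : (c:ℂ)^2 * ((c:ℂ)^2)⁻¹ = 1 := mul_inv_cancel₀ hcne
  have e1 : (c:ℂ)^2 * (r₁ + r₂) = 2*((a:ℂ)+b)*z := by
    rw [hr1, hr2]; linear_combination (2*((a:ℂ)+b)*z) * hinv
  have e2 : (c:ℂ)^2 * (r₁ * r₂) = ((a:ℂ)+b)^2 := by
    rw [hr1, hr2]
    linear_combination (-(c:ℂ)^2 * ((c:ℂ)^2)⁻¹^2) * hw + ((c:ℂ)^2 * ((c:ℂ)^2)⁻¹ + 1) * ((a:ℂ)+b)^2 * hinv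
  have hfact : P = C ((c:ℂ)^2) * (X - C r₁) * (X - C r₂) := by
    have expand : C ((c:ℂ)^2) * (X - C r₁) * (X - C r₂)
        = C ((c:ℂ)^2)*X^2 - C ((c:ℂ)^2*(r₁+r₂))*X + C ((c:ℂ)^2*(r₁*r₂)) := by
      simp only [C_mul, C_add]; ring
    rw [hP, expand, e1, e2]
  have hroots : P.roots = {r₁, r₂} := by
    rw [hfact, mul_assoc, roots_C_mul _ hcne,
      roots_mul (mul_ne_zero (X_sub_C_ne_zero r₁) (X_sub_C_ne_zero r₂)),
      roots_X_sub_C, roots_X_sub_C]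
    rfl
  -- roots are nonzero
  have hroot_ne : ∀ ζ : ℂ, P.eval ζ = 0 → ζ ≠ 0 := by
    intro ζ h h0
    rw [h0, heval 0] at h
    apply hsne
    have : ((a:ℂ)+b)^2 = 0 := by linear_combination h
    exact pow_eq_zero_iff (by norm_num) |>.mp this
  -- key sign identity for roots
  have hkey : ∀ ζ : ℂ, P.eval ζ = 0 →
      (z.re^2/a^2 + z.im^2/b^2 - 1) * (4*a^2*b^2*(a+b)^2*(Complex.normSq ζ)^2)
      = (a+b)^2*(Complex.normSq ζ - 1)*((a-b)^2*Complex.normSq ζ - (a+b)^2)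
        *(b^2*ζ.re^2 + a^2*ζ.im^2) := by
    intro ζ h
    apply key_identity' a b hab hb z ζ
    rw [heval ζ] at h
    linear_combination h - ζ^2 * hc2C
  have habs_pos : ∀ ζ : ℂ, ζ ≠ 0 → 0 < b^2*ζ.re^2 + a^2*ζ.im^2 := by
    intro ζ h
    have : ζ.re ≠ 0 ∨ ζ.im ≠ 0 := by
      by_contra hh
      push_neg at hh
      exact h (Complex.ext hh.1 hh.2)
    rcases this with h1 | h1
    · have h2 : 0 < b^2 * ζ.re^2 := by positivity
      have h3 : 0 ≤ a^2 * ζ.im^2 := by positivity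
      linarith
    · have h2 : 0 < a^2 * ζ.im^2 := by positivity
      have h3 : 0 ≤ b^2 * ζ.re^2 := by positivity
      linarith
  -- inside: every root has modulus > 1
  have inside_root : z.re^2/a^2 + z.im^2/b^2 < 1 → ∀ ζ : ℂ, P.eval ζ = 0 →
      1 < ‖ζ‖ := by
    intro hE ζ h
    have hne := hroot_ne ζ h
    have hk := hkey ζ h
    set q := Complex.normSq ζ with hqd
    have hqpos : 0 < q := Complex.normSq_pos.mpr hne
    have hbig : 0 < b^2*ζ.re^2 + a^2*ζ.im^2 := habs_pos ζ hne
    have hL : (z.re^2/a^2 + z.im^2/b^2 - 1) * (4*a^2*b^2*(a+b)^2*q^2) < 0 :=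
      mul_neg_of_neg_of_pos (by linarith) (by positivity)
    rw [hk] at hL
    have h1 : (q-1)*((a-b)^2*q - (a+b)^2) < 0 := by
      by_contra hcon
      push_neg at hcon
      have h2 : 0 ≤ (a+b)^2 * ((q-1)*((a-b)^2*q-(a+b)^2)) * (b^2*ζ.re^2+a^2*ζ.im^2) := by
        have := mul_nonneg (mul_nonneg (sq_nonneg (a+b)) hcon) hbig.le
        linarith
      nlinarith [hL]
    have hq1 : 1 < q := by
      by_contra hcon
      push_neg at hcon
      have h2 : (a-b)^2*q - (a+b)^2 < 0 := by nlinarith [sq_nonneg (a-b)]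
      nlinarith
    nlinarith [Complex.sq_norm ζ, norm_nonneg ζ]
  -- outside: every root has modulus < 1 or normSq > (a+b)^2/(a-b)^2
  have outside_root : 1 < z.re^2/a^2 + z.im^2/b^2 → ∀ ζ : ℂ, P.eval ζ = 0 →
      Complex.normSq ζ < 1 ∨ (a+b)^2 < (a-b)^2 * Complex.normSq ζ := by
    intro hE ζ h
    have hne := hroot_ne ζ h
    have hk := hkey ζ h
    set q := Complex.normSq ζ with hqd
    have hqpos : 0 < q := Complex.normSq_pos.mpr hne
    have hbig : 0 < b^2*ζ.re^2 + a^2*ζ.im^2 := habs_pos ζ hne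
    have hL : 0 < (z.re^2/a^2 + z.im^2/b^2 - 1) * (4*a^2*b^2*(a+b)^2*q^2) :=
      mul_pos (by linarith) (by positivity)
    rw [hk] at hL
    have h1 : 0 < (q-1)*((a-b)^2*q - (a+b)^2) := by
      by_contra hcon
      push_neg at hcon
      have h2 : (a+b)^2 * ((q-1)*((a-b)^2*q-(a+b)^2)) * (b^2*ζ.re^2+a^2*ζ.im^2) ≤ 0 := by
        have := mul_nonpos_of_nonneg_of_nonpos
          (mul_nonneg (sq_nonneg (a+b)) hbig.le) hcon
        nlinarith [hbig, sq_nonneg (a+b)]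
      nlinarith [hL]
    by_contra hcon
    push_neg at hcon
    obtain ⟨hq1, hq2⟩ := hcon
    nlinarith
  -- product of normSq of the two roots
  have hprod : Complex.normSq r₁ * Complex.normSq r₂ = ((a+b)^2/(a^2-b^2))^2 := by
    rw [← Complex.normSq_mul]
    have hr12 : r₁ * r₂ = (((a+b)^2/(a^2-b^2) : ℝ) : ℂ) := by
      have : r₁ * r₂ = ((a:ℂ)+b)^2 / (c:ℂ)^2 := by
        rw [eq_div_iff hcne]
        linear_combination e2
      rw [this, hc2C]
      push_cast
      ring
    rw [hr12, Complex.normSq_ofReal]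
    ring
  have hprod2 : (a-b)^2 * (Complex.normSq r₁ * Complex.normSq r₂) = (a+b)^2 := by
    rw [hprod]
    have h1 : a^2 - b^2 = (a+b)*(a-b) := by ring
    rw [h1]
    field_simp
  have hevr₁ : P.eval r₁ = 0 := by
    rw [hfact]; simp
  have hevr₂ : P.eval r₂ = 0 := by
    rw [hfact]; simp
  have habs_lt : ∀ ζ : ℂ, Complex.normSq ζ < 1 → ‖ζ‖ < 1 := by
    intro ζ h
    nlinarith [Complex.sq_norm ζ, norm_nonneg ζ]
  have habs_gt : ∀ ζ : ℂ, 1 < Complex.normSq ζ → 1 < ‖ζ‖ := by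
    intro ζ h
    nlinarith [Complex.sq_norm ζ, norm_nonneg ζ]
  refine ⟨?_, ?_, ?_⟩
  · -- part 1: equivalence
    intro ζ hζ
    rw [heval ζ, hf ζ, div_eq_iff (mul_ne_zero (mul_ne_zero two_ne_zero hsne) hζ)]
    constructor <;> intro h <;> linear_combination h
  · -- inside
    intro hE
    constructor
    · intro ζ hζ
      exact inside_root hE ζ ((isRoot_of_mem_roots hζ))
    · have hfeq : (P.roots.filter fun ζ => 1 < ‖ζ‖) = P.roots :=
        Multiset.filter_eq_self.mpr
          (fun ζ hζ => inside_root hE ζ (isRoot_of_mem_roots hζ))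
      rw [hfeq, hroots]
      rfl
  · -- outside
    intro hE
    have hdq : 0 < (a-b)^2 := by positivity
    have hsq : (a-b)^2 < (a+b)^2 := by nlinarith
    have hq1pos : 0 < Complex.normSq r₁ := Complex.normSq_pos.mpr (hroot_ne r₁ hevr₁)
    have hq2pos : 0 < Complex.normSq r₂ := Complex.normSq_pos.mpr (hroot_ne r₂ hevr₂)
    rcases outside_root hE r₁ hevr₁ with h1 | h1
    · -- |r₁| < 1, so |r₂| > 1
      have h2 : 1 < Complex.normSq r₂ := by
        nlinarith [hprod2, mul_pos hdq hq1pos]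
      have ha1 : ‖r₁‖ < 1 := habs_lt r₁ h1
      have ha2 : 1 < ‖r₂‖ := habs_gt r₂ h2
      have hna1 : ¬ (1 < ‖r₁‖) := by linarith
      have hna2 : ¬ (‖r₂‖ < 1) := by linarith
      constructor
      · rw [hroots]
        simp [Multiset.filter_cons, Multiset.filter_singleton, hna1, ha2]
      · rw [hroots]
        simp [Multiset.filter_cons, Multiset.filter_singleton, ha1, hna2]
    · -- normSq r₁ > (a+b)²/(a-b)² > 1, so |r₂| < 1
      have h1' : 1 < Complex.normSq r₁ := by nlinarith
      have h2 : Complex.normSq r₂ < 1 := by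
        nlinarith [hprod2, mul_pos hdq hq2pos]
      have ha1 : 1 < ‖r₁‖ := habs_gt r₁ h1'
      have ha2 : ‖r₂‖ < 1 := habs_lt r₂ h2
      have hna1 : ¬ (‖r₁‖ < 1) := by linarith
      have hna2 : ¬ (1 < ‖r₂‖) := by linarith
      constructor
      · rw [hroots]
        simp [Multiset.filter_cons, Multiset.filter_singleton, ha1, hna2]
      · rw [hroots]
        simp [Multiset.filter_cons, Multiset.filter_singleton, hna1, ha2]
end
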